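/- Let M be a finite MDP, let H ≥ 0 be a finite horizon, let π and π_β be policies with π_β(a|s) > 0 whenever π(a|s) > 0, and define the cumulative importance weights w_t = ∏_{t'=0}^{t} π(a_{t'}|s_{t'})/π_β(a_{t'}|s_{t'}) with the convention w_{−1} = 1. Then for EVERY function Q̂ : S × A → ℝ, the doubly robust estimator is unbiased when the true behavior policy is used: E_{τ ∼ p_{π_β}}[ Σ_{t=0}^{H} γ^t ( w_t·(r(s_t,a_t) − Q̂(s_t,a_t)) + w_{t−1}·E_{a ∼ π(·|s_t)}[Q̂(s_t,a)] ) ] = J(π). -/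

import Mathlib

open Finset

/-- Probability of a trajectory `τ = (s_0, a_0, …, s_H, a_H)` in a finite-horizon MDP
with `H + 1` decision steps, initial distribution `d0`, transition kernel `T` and
policy `π`. -/
noncomputable def trajP {S A : Type} [Fintype S] [Fintype A] (H : ℕ)
    (d0 : S → ℝ) (T : S → A → S → ℝ) (π : S → A → ℝ)
    (τ : (Fin (H + 1) → S) × (Fin (H + 1) → A)) : ℝ :=
  d0 (τ.1 0) * (∏ t : Fin (H + 1), π (τ.1 t) (τ.2 t)) *
    ∏ t : Fin H, T (τ.1 t.castSucc) (τ.2 t.castSucc) (τ.1 t.succ)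


/-- Finite-horizon expected discounted return
`J(π) = E_{τ ∼ p_π}[Σ_{t=0}^H γ^t r(s_t, a_t)]`. -/
noncomputable def Jret {S A : Type} [Fintype S] [Fintype A] (H : ℕ)
    (d0 : S → ℝ) (T : S → A → S → ℝ) (π : S → A → ℝ) (r : S → A → ℝ) (γ : ℝ) : ℝ :=
  ∑ τ : (Fin (H + 1) → S) × (Fin (H + 1) → A),
    trajP H d0 T π τ * ∑ t : Fin (H + 1), γ ^ (t : ℕ) * r (τ.1 t) (τ.2 t)

section DRaux

set_option linter.unusedSectionVars false

variable {S A : Type} [Fintype S] [Fintype A]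

/-- Trajectory probability with a time-dependent policy. -/
noncomputable def trajPt (H : ℕ) (d0 : S → ℝ) (T : S → A → S → ℝ)
    (σ : Fin (H + 1) → S → A → ℝ)
    (τ : (Fin (H + 1) → S) × (Fin (H + 1) → A)) : ℝ :=
  d0 (τ.1 0) * (∏ t : Fin (H + 1), σ t (τ.1 t) (τ.2 t)) *
    ∏ t : Fin H, T (τ.1 t.castSucc) (τ.2 t.castSucc) (τ.1 t.succ)

lemma dr_sum_snoc {X : Type} [Fintype X] {n : ℕ} (g : (Fin (n + 1) → X) → ℝ) :
    ∑ f, g f = ∑ p : Fin n → X, ∑ x : X, g (Fin.snoc p x) := by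
  rw [← (Fin.snocEquiv (fun _ => X)).sum_comp g, Fintype.sum_prod_type]
  rw [Finset.sum_comm]
  rfl

lemma dr_trajPt_snoc (H : ℕ) (d0 : S → ℝ) (T : S → A → S → ℝ)
    (σ : Fin (H + 2) → S → A → ℝ) (s : Fin (H + 1) → S) (a : Fin (H + 1) → A)
    (x : S) (y : A) :
    trajPt (H + 1) d0 T σ (Fin.snoc s x, Fin.snoc a y)
      = trajPt H d0 T (fun j => σ j.castSucc) (s, a)
          * (T (s (Fin.last H)) (a (Fin.last H)) x * σ (Fin.last (H + 1)) x y) := by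
  unfold trajPt
  simp only [Fin.prod_univ_castSucc, Fin.succ_castSucc, Fin.snoc_castSucc, Fin.snoc_last,
    Fin.succ_last]
  rw [show ((0 : Fin (H + 2))) = (0 : Fin (H + 1)).castSucc from rfl, Fin.snoc_castSucc]
  ring

lemma dr_trajPt_snoc_action (H : ℕ) (d0 : S → ℝ) (T : S → A → S → ℝ)
    (σ : Fin (H + 1) → S → A → ℝ) (s : Fin (H + 1) → S) (q : Fin H → A) (y : A) :
    trajPt H d0 T σ (s, Fin.snoc q y)
      = ((d0 (s 0) * ∏ t : Fin H, σ t.castSucc (s t.castSucc) (q t)) *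
          ∏ t : Fin H, T (s t.castSucc) (q t) (s t.succ))
        * σ (Fin.last H) (s (Fin.last H)) y := by
  unfold trajPt
  dsimp only
  rw [Fin.prod_univ_castSucc]
  simp only [Fin.snoc_castSucc, Fin.snoc_last]
  rw [← mul_assoc, mul_right_comm]

lemma dr_lastAction (H : ℕ) (d0 : S → ℝ) (T : S → A → S → ℝ)
    (σ σ' : Fin (H + 1) → S → A → ℝ)
    (hag : ∀ j : Fin (H + 1), (j : ℕ) < H → σ j = σ' j)
    (hσ' : ∀ s, ∑ a, σ' (Fin.last H) s a = 1)
    (f : S → A → ℝ) :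
    ∑ τ : (Fin (H + 1) → S) × (Fin (H + 1) → A),
        trajPt H d0 T σ τ * f (τ.1 (Fin.last H)) (τ.2 (Fin.last H))
      = ∑ τ : (Fin (H + 1) → S) × (Fin (H + 1) → A),
          trajPt H d0 T σ' τ *
            ∑ a, σ (Fin.last H) (τ.1 (Fin.last H)) a * f (τ.1 (Fin.last H)) a := by
  rw [Fintype.sum_prod_type, Fintype.sum_prod_type]
  refine Finset.sum_congr rfl fun s _ => ?_
  rw [dr_sum_snoc (fun af => trajPt H d0 T σ (s, af) * f (s (Fin.last H)) (af (Fin.last H))),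
    dr_sum_snoc (fun af => trajPt H d0 T σ' (s, af) *
      ∑ a, σ (Fin.last H) (s (Fin.last H)) a * f (s (Fin.last H)) a)]
  refine Finset.sum_congr rfl fun q _ => ?_
  simp only [dr_trajPt_snoc_action, Fin.snoc_last]
  have hW : ∀ t : Fin H, σ t.castSucc (s t.castSucc) (q t)
      = σ' t.castSucc (s t.castSucc) (q t) := by
    intro t
    rw [hag t.castSucc (by simpa using t.isLt)]
  simp only [hW]
  set W := (d0 (s 0) * ∏ t : Fin H, σ' t.castSucc (s t.castSucc) (q t)) *
      ∏ t : Fin H, T (s t.castSucc) (q t) (s t.succ) with hWdef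
  have h1 : (∑ y, W * σ (Fin.last H) (s (Fin.last H)) y * f (s (Fin.last H)) y)
      = W * ∑ a, σ (Fin.last H) (s (Fin.last H)) a * f (s (Fin.last H)) a := by
    rw [Finset.mul_sum]; exact Finset.sum_congr rfl fun y _ => by ring
  have h2 : (∑ y, W * σ' (Fin.last H) (s (Fin.last H)) y *
        ∑ a, σ (Fin.last H) (s (Fin.last H)) a * f (s (Fin.last H)) a)
      = W * ∑ a, σ (Fin.last H) (s (Fin.last H)) a * f (s (Fin.last H)) a := by
    rw [← Finset.sum_mul, ← Finset.mul_sum, hσ', mul_one]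
  rw [h1, h2]

lemma dr_reduce (H : ℕ) (d0 : S → ℝ) (T : S → A → S → ℝ)
    (σ : Fin (H + 2) → S → A → ℝ)
    (hσ : ∀ s, ∑ a, σ (Fin.last (H + 1)) s a = 1)
    (hT1 : ∀ s a, ∑ s', T s a s' = 1)
    (F : (Fin (H + 2) → S) × (Fin (H + 2) → A) → ℝ)
    (F' : (Fin (H + 1) → S) × (Fin (H + 1) → A) → ℝ)
    (hF : ∀ s a x y, F (Fin.snoc s x, Fin.snoc a y) = F' (s, a)) :
    ∑ τ : (Fin (H + 2) → S) × (Fin (H + 2) → A), trajPt (H + 1) d0 T σ τ * F τ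
      = ∑ τ' : (Fin (H + 1) → S) × (Fin (H + 1) → A),
          trajPt H d0 T (fun j => σ j.castSucc) τ' * F' τ' := by
  rw [Fintype.sum_prod_type, Fintype.sum_prod_type,
    dr_sum_snoc (fun sf => ∑ af : Fin (H + 2) → A, trajPt (H + 1) d0 T σ (sf, af) * F (sf, af))]
  refine Finset.sum_congr rfl fun p _ => ?_
  have hx : ∀ x : S,
      (∑ af : Fin (H + 2) → A, trajPt (H + 1) d0 T σ (Fin.snoc p x, af) * F (Fin.snoc p x, af))
        = ∑ q : Fin (H + 1) → A, (trajPt H d0 T (fun j => σ j.castSucc) (p, q) * F' (p, q)) *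
            (T (p (Fin.last H)) (q (Fin.last H)) x) := by
    intro x
    rw [dr_sum_snoc (fun af => trajPt (H + 1) d0 T σ (Fin.snoc p x, af) * F (Fin.snoc p x, af))]
    refine Finset.sum_congr rfl fun q _ => ?_
    simp only [dr_trajPt_snoc, hF]
    rw [show (∑ y : A, trajPt H d0 T (fun j => σ j.castSucc) (p, q) *
          (T (p (Fin.last H)) (q (Fin.last H)) x * σ (Fin.last (H + 1)) x y) * F' (p, q))
        = (trajPt H d0 T (fun j => σ j.castSucc) (p, q) * F' (p, q) *
            T (p (Fin.last H)) (q (Fin.last H)) x) * ∑ y : A, σ (Fin.last (H + 1)) x y from by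
      rw [Finset.mul_sum]; exact Finset.sum_congr rfl fun y _ => by ring]
    rw [hσ, mul_one]
  simp only [hx]
  rw [Finset.sum_comm]
  refine Finset.sum_congr rfl fun q _ => ?_
  rw [← Finset.mul_sum, hT1, mul_one]

lemma dr_eval2 (d0 : S → ℝ) (T : S → A → S → ℝ) (hT1 : ∀ s a, ∑ s', T s a s' = 1) :
    ∀ (H : ℕ) (t : Fin (H + 1)) (σ σ' : Fin (H + 1) → S → A → ℝ),
      (∀ j s, ∑ a, σ j s a = 1) → (∀ j s, ∑ a, σ' j s a = 1) →
      (∀ j : Fin (H + 1), (j : ℕ) < (t : ℕ) → σ j = σ' j) →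
      ∀ f : S → A → ℝ,
      (∑ τ : (Fin (H + 1) → S) × (Fin (H + 1) → A),
          trajPt H d0 T σ τ * f (τ.1 t) (τ.2 t))
        = ∑ τ : (Fin (H + 1) → S) × (Fin (H + 1) → A),
            trajPt H d0 T σ' τ * ∑ a, σ t (τ.1 t) a * f (τ.1 t) a := by
  intro H
  induction H with
  | zero =>
    intro t σ σ' hσ hσ' hag f
    have ht : t = Fin.last 0 := Fin.ext (by omega)
    subst ht
    exact dr_lastAction 0 d0 T σ σ' (fun j hj => absurd hj (by omega)) (fun s => hσ' _ s) f
  | succ H ih =>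
    intro t σ σ' hσ hσ' hag f
    by_cases ht : (t : ℕ) = H + 1
    · have ht' : t = Fin.last (H + 1) := Fin.ext ht
      subst ht'
      exact dr_lastAction (H + 1) d0 T σ σ'
        (fun j hj => hag j (by simpa using hj)) (fun s => hσ' _ s) f
    · have htlt : (t : ℕ) < H + 1 := lt_of_le_of_ne (Nat.lt_succ_iff.mp t.isLt) ht
      set t' : Fin (H + 1) := t.castLT htlt with ht'def
      have htc : t = t'.castSucc := by ext; simp [ht'def]
      have hL := dr_reduce H d0 T σ (fun s => hσ _ s) hT1
        (fun τ => f (τ.1 t) (τ.2 t)) (fun τ' => f (τ'.1 t') (τ'.2 t'))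
        (by
          intro s a x y
          rw [htc]
          simp only [Fin.snoc_castSucc])
      have hR := dr_reduce H d0 T σ' (fun s => hσ' _ s) hT1
        (fun τ => ∑ a, σ t (τ.1 t) a * f (τ.1 t) a)
        (fun τ' => ∑ a, σ t (τ'.1 t') a * f (τ'.1 t') a)
        (by
          intro s a x y
          rw [htc]
          simp only [Fin.snoc_castSucc])
      rw [hL, hR]
      have := ih t' (fun j => σ j.castSucc) (fun j => σ' j.castSucc)
        (fun j s => hσ _ s) (fun j s => hσ' _ s)
        (fun j hj => hag j.castSucc (by exact hj)) f
      rw [this, htc]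

end DRaux

/-- **Unbiasedness of the doubly robust estimator (true behavior policy case).**
With cumulative importance weights `w_t = ∏_{t'=0}^t π(a_{t'}|s_{t'})/π_β(a_{t'}|s_{t'})`
(and `w_{-1} = 1`), for every function `Q̂ : S × A → ℝ`,
`E_{τ ∼ p_{π_β}}[Σ_t γ^t (w_t (r(s_t,a_t) − Q̂(s_t,a_t)) + w_{t−1} E_{a∼π(·|s_t)}[Q̂(s_t,a)])] = J(π)`. -/
theorem doubly_robust_unbiased
    {S A : Type} [Fintype S] [Fintype A]
    (H : ℕ) (d0 : S → ℝ) (T : S → A → S → ℝ)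
    (π πβ : S → A → ℝ) (r : S → A → ℝ) (γ : ℝ) (hγ0 : 0 < γ) (hγ1 : γ < 1)
    (Qhat : S → A → ℝ)
    (hd00 : ∀ s, 0 ≤ d0 s) (hd01 : ∑ s, d0 s = 1)
    (hT0 : ∀ s a s', 0 ≤ T s a s') (hT1 : ∀ s a, ∑ s', T s a s' = 1)
    (hπ0 : ∀ s a, 0 ≤ π s a) (hπ1 : ∀ s, ∑ a, π s a = 1)
    (hβ0 : ∀ s a, 0 ≤ πβ s a) (hβ1 : ∀ s, ∑ a, πβ s a = 1)
    (hsupp : ∀ s a, 0 < π s a → 0 < πβ s a) :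
    ∑ τ : (Fin (H + 1) → S) × (Fin (H + 1) → A),
        trajP H d0 T πβ τ *
          ∑ t : Fin (H + 1), γ ^ (t : ℕ) *
            ((∏ t' ∈ univ.filter fun t' : Fin (H + 1) => t' ≤ t,
                π (τ.1 t') (τ.2 t') / πβ (τ.1 t') (τ.2 t')) *
                (r (τ.1 t) (τ.2 t) - Qhat (τ.1 t) (τ.2 t)) +
              (∏ t' ∈ univ.filter fun t' : Fin (H + 1) => t' < t,
                π (τ.1 t') (τ.2 t') / πβ (τ.1 t') (τ.2 t')) *
                ∑ a : A, π (τ.1 t) a * Qhat (τ.1 t) a) =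
      Jret H d0 T π r γ := by
  classical
  -- behaviour-policy times importance ratio equals target policy
  have key : ∀ s a, πβ s a * (π s a / πβ s a) = π s a := by
    intro s a
    by_cases h : πβ s a = 0
    · have hπz : π s a = 0 := by
        by_contra hne
        have := hsupp s a (lt_of_le_of_ne (hπ0 s a) (Ne.symm hne))
        rw [h] at this
        exact lt_irrefl 0 this
      simp [h, hπz]
    · rw [mul_comm, div_mul_cancel₀ _ h]
  set σπ : Fin (H + 1) → S → A → ℝ := fun _ => π with hσπdef
  set σle : Fin (H + 1) → Fin (H + 1) → S → A → ℝ :=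
    fun t j => if j ≤ t then π else πβ with hσledef
  set σlt : Fin (H + 1) → Fin (H + 1) → S → A → ℝ :=
    fun t j => if j < t then π else πβ with hσltdef
  have hσπ1 : ∀ j s, ∑ a, σπ j s a = 1 := fun j s => hπ1 s
  have hσle1 : ∀ t j s, ∑ a, σle t j s a = 1 := by
    intro t j s
    by_cases h : j ≤ t <;> simp [hσledef, h, hπ1, hβ1]
  have hσlt1 : ∀ t j s, ∑ a, σlt t j s a = 1 := by
    intro t j s
    by_cases h : j < t <;> simp [hσltdef, h, hπ1, hβ1]
  -- trajectory probability times cumulative weights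
  have hPw : ∀ (t : Fin (H + 1)) (τ : (Fin (H + 1) → S) × (Fin (H + 1) → A)),
      trajP H d0 T πβ τ *
        (∏ t' ∈ univ.filter fun t' : Fin (H + 1) => t' ≤ t,
          π (τ.1 t') (τ.2 t') / πβ (τ.1 t') (τ.2 t'))
      = trajPt H d0 T (σle t) τ := by
    intro t τ
    unfold trajP trajPt
    have hbody : ∀ j : Fin (H + 1), σle t j (τ.1 j) (τ.2 j)
        = if j ≤ t then π (τ.1 j) (τ.2 j) else πβ (τ.1 j) (τ.2 j) := by
      intro j
      simp only [hσledef]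
      split <;> rfl
    have hprod : (∏ j : Fin (H + 1), πβ (τ.1 j) (τ.2 j)) *
        (∏ t' ∈ univ.filter fun t' : Fin (H + 1) => t' ≤ t,
          π (τ.1 t') (τ.2 t') / πβ (τ.1 t') (τ.2 t'))
        = ∏ j : Fin (H + 1), σle t j (τ.1 j) (τ.2 j) := by
      simp only [hbody]
      rw [Finset.prod_ite]
      rw [← Finset.prod_filter_mul_prod_filter_not univ (fun j : Fin (H + 1) => j ≤ t)
        (fun j => πβ (τ.1 j) (τ.2 j))]
      rw [mul_right_comm, ← Finset.prod_mul_distrib]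
      simp only [key]
    rw [← hprod]
    ring
  have hPw' : ∀ (t : Fin (H + 1)) (τ : (Fin (H + 1) → S) × (Fin (H + 1) → A)),
      trajP H d0 T πβ τ *
        (∏ t' ∈ univ.filter fun t' : Fin (H + 1) => t' < t,
          π (τ.1 t') (τ.2 t') / πβ (τ.1 t') (τ.2 t'))
      = trajPt H d0 T (σlt t) τ := by
    intro t τ
    unfold trajP trajPt
    have hbody : ∀ j : Fin (H + 1), σlt t j (τ.1 j) (τ.2 j)
        = if j < t then π (τ.1 j) (τ.2 j) else πβ (τ.1 j) (τ.2 j) := by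
      intro j
      simp only [hσltdef]
      split <;> rfl
    have hprod : (∏ j : Fin (H + 1), πβ (τ.1 j) (τ.2 j)) *
        (∏ t' ∈ univ.filter fun t' : Fin (H + 1) => t' < t,
          π (τ.1 t') (τ.2 t') / πβ (τ.1 t') (τ.2 t'))
        = ∏ j : Fin (H + 1), σlt t j (τ.1 j) (τ.2 j) := by
      simp only [hbody]
      rw [Finset.prod_ite]
      rw [← Finset.prod_filter_mul_prod_filter_not univ (fun j : Fin (H + 1) => j < t)
        (fun j => πβ (τ.1 j) (τ.2 j))]
      rw [mul_right_comm, ← Finset.prod_mul_distrib]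
      simp only [key]
    rw [← hprod]
    ring
  -- per-time-step identity
  have main : ∀ t : Fin (H + 1),
      ((∑ τ : (Fin (H + 1) → S) × (Fin (H + 1) → A),
          trajPt H d0 T (σle t) τ * (r (τ.1 t) (τ.2 t) - Qhat (τ.1 t) (τ.2 t)))
        + ∑ τ : (Fin (H + 1) → S) × (Fin (H + 1) → A),
            trajPt H d0 T (σlt t) τ * ∑ a, π (τ.1 t) a * Qhat (τ.1 t) a)
      = ∑ τ : (Fin (H + 1) → S) × (Fin (H + 1) → A),
          trajP H d0 T π τ * r (τ.1 t) (τ.2 t) := by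
    intro t
    have hltle : σle t t = π := by simp [hσledef]
    have hag1 : ∀ j : Fin (H + 1), (j : ℕ) < (t : ℕ) → σle t j = σπ j := by
      intro j hj
      simp only [hσledef, hσπdef]
      rw [if_pos (Fin.le_def.mpr (le_of_lt hj))]
    have hag2 : ∀ j : Fin (H + 1), (j : ℕ) < (t : ℕ) → σle t j = σlt t j := by
      intro j hj
      simp only [hσledef, hσltdef]
      rw [if_pos (Fin.le_def.mpr (le_of_lt hj)), if_pos (Fin.lt_def.mpr hj)]
    have e1 := dr_eval2 d0 T hT1 H t (σle t) σπ (hσle1 t) hσπ1 hag1 r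
    have e2 := dr_eval2 d0 T hT1 H t (σle t) (σlt t) (hσle1 t) (hσlt1 t) hag2 Qhat
    have e3 := dr_eval2 d0 T hT1 H t σπ σπ hσπ1 hσπ1 (fun _ _ => rfl) r
    have hJπ : trajPt H d0 T σπ = trajP H d0 T π := rfl
    rw [hltle] at e1 e2
    rw [hJπ] at e1 e3
    have hsplit : (∑ τ : (Fin (H + 1) → S) × (Fin (H + 1) → A),
        trajPt H d0 T (σle t) τ * (r (τ.1 t) (τ.2 t) - Qhat (τ.1 t) (τ.2 t)))
        = (∑ τ : (Fin (H + 1) → S) × (Fin (H + 1) → A),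
            trajPt H d0 T (σle t) τ * r (τ.1 t) (τ.2 t))
          - ∑ τ : (Fin (H + 1) → S) × (Fin (H + 1) → A),
              trajPt H d0 T (σle t) τ * Qhat (τ.1 t) (τ.2 t) := by
      rw [← Finset.sum_sub_distrib]
      exact Finset.sum_congr rfl fun τ _ => by ring
    rw [hsplit, e1, e2, e3]
    ring
  -- assemble
  calc
    ∑ τ : (Fin (H + 1) → S) × (Fin (H + 1) → A),
        trajP H d0 T πβ τ *
          ∑ t : Fin (H + 1), γ ^ (t : ℕ) *
            ((∏ t' ∈ univ.filter fun t' : Fin (H + 1) => t' ≤ t,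
                π (τ.1 t') (τ.2 t') / πβ (τ.1 t') (τ.2 t')) *
                (r (τ.1 t) (τ.2 t) - Qhat (τ.1 t) (τ.2 t)) +
              (∏ t' ∈ univ.filter fun t' : Fin (H + 1) => t' < t,
                π (τ.1 t') (τ.2 t') / πβ (τ.1 t') (τ.2 t')) *
                ∑ a : A, π (τ.1 t) a * Qhat (τ.1 t) a)
      = ∑ t : Fin (H + 1), γ ^ (t : ℕ) *
          ((∑ τ : (Fin (H + 1) → S) × (Fin (H + 1) → A),
              trajPt H d0 T (σle t) τ * (r (τ.1 t) (τ.2 t) - Qhat (τ.1 t) (τ.2 t)))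
            + ∑ τ : (Fin (H + 1) → S) × (Fin (H + 1) → A),
                trajPt H d0 T (σlt t) τ * ∑ a, π (τ.1 t) a * Qhat (τ.1 t) a) := by
        refine Eq.trans (Finset.sum_congr rfl fun τ _ => Finset.mul_sum _ _ _) ?_
        rw [Finset.sum_comm]
        refine Finset.sum_congr rfl fun t _ => ?_
        rw [← Finset.sum_add_distrib, Finset.mul_sum]
        refine Finset.sum_congr rfl fun τ _ => ?_
        rw [← hPw t τ, ← hPw' t τ]
        ring
    _ = ∑ t : Fin (H + 1), γ ^ (t : ℕ) *
          ∑ τ : (Fin (H + 1) → S) × (Fin (H + 1) → A),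
            trajP H d0 T π τ * r (τ.1 t) (τ.2 t) := by
        refine Finset.sum_congr rfl fun t _ => ?_
        rw [main t]
    _ = Jret H d0 T π r γ := by
        unfold Jret
        simp only [Finset.mul_sum]
        rw [Finset.sum_comm]
        refine Finset.sum_congr rfl fun t _ => Finset.sum_congr rfl fun τ _ => by ring
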